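/- Let n ≥ 1 be even, s ≤ n/2, A = {1,...,n/2}, B = {n/2+1,...,n}. There exists a bipartite graph G with parts A and B such that: (a) every edge ab (a ∈ A, b ∈ B) satisfies b - a ≠ 1; (b) Δ(G) ≤ 2s; (c) every vertex in {2s,...,n/2-s} ∪ {n/2+2s,...,n-s} has degree exactly 2s; (d) for every c ∈ {2s,...,n-2s}, exactly s edges ab of G satisfy b - a = c; (e) for every c ∈ {1,...,n-1}, at most s edges satisfy b - a = c. -/

import Mathlib

theorem stmt_13 (n s : ℕ) (hn : 1 ≤ n) (heven : Even n) (hs : s ≤ n / 2) :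
    ∃ E : Finset (ℕ × ℕ),
      (∀ e ∈ E, e.1 ∈ Finset.Icc 1 (n / 2) ∧ e.2 ∈ Finset.Icc (n / 2 + 1) n) ∧
      (∀ e ∈ E, e.2 - e.1 ≠ 1) ∧
      (∀ v : ℕ, (E.filter (fun e => e.1 = v ∨ e.2 = v)).card ≤ 2 * s) ∧
      (∀ v ∈ Finset.Icc (2 * s) (n / 2 - s) ∪ Finset.Icc (n / 2 + 2 * s) (n - s),
        (E.filter (fun e => e.1 = v ∨ e.2 = v)).card = 2 * s) ∧
      (∀ c ∈ Finset.Icc (2 * s) (n - 2 * s),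
        (E.filter (fun e => e.2 - e.1 = c)).card = s) ∧
      (∀ c ∈ Finset.Icc 1 (n - 1),
        (E.filter (fun e => e.2 - e.1 = c)).card ≤ s) := by
  have h2 : n % 2 = 0 := Nat.even_iff.mp heven
  set E : Finset (ℕ × ℕ) := (Finset.Icc 1 (n / 2) ×ˢ Finset.Icc (n / 2 + 1) n).filter
      (fun e => n + 1 ≤ e.1 + e.2 ∧ e.1 + e.2 ≤ n + 2 * s ∧ e.1 + 2 ≤ e.2) with hEdef
  have hE : ∀ e : ℕ × ℕ, e ∈ E ↔ (1 ≤ e.1 ∧ e.1 ≤ n / 2 ∧ n / 2 + 1 ≤ e.2 ∧ e.2 ≤ n ∧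
      n + 1 ≤ e.1 + e.2 ∧ e.1 + e.2 ≤ n + 2 * s ∧ e.1 + 2 ≤ e.2) := by
    intro e
    simp only [hEdef, Finset.mem_filter, Finset.mem_product, Finset.mem_Icc]
    tauto
  -- degree upper bound
  have hdeg_le : ∀ v, (E.filter (fun e => e.1 = v ∨ e.2 = v)).card ≤ 2 * s := by
    intro v
    have h := Finset.card_le_card_of_injOn (s := E.filter (fun e => e.1 = v ∨ e.2 = v))
      (t := Finset.Icc 1 (2 * s)) (fun e => e.1 + e.2 - n) ?_ ?_
    · simpa using h
    · intro e he
      rw [Finset.mem_coe, Finset.mem_filter] at he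
      have := (hE e).mp he.1
      simp only [Finset.mem_coe, Finset.mem_Icc]
      omega
    · intro e he e' he' hee
      simp only [Finset.mem_coe, Finset.mem_filter] at he he'
      have h1 := (hE e).mp he.1
      have h2 := (hE e').mp he'.1
      have hv := he.2
      have hv' := he'.2
      simp only at hee
      have : e.1 = e'.1 ∧ e.2 = e'.2 := by omega
      exact Prod.ext this.1 this.2
  -- colour upper bound
  have hcol_le : ∀ c, (E.filter (fun e => e.2 - e.1 = c)).card ≤ s := by
    intro c
    have h := Finset.card_le_card_of_injOn (s := E.filter (fun e => e.2 - e.1 = c))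
      (t := Finset.Icc 1 s) (fun e => (e.1 + e.2 - n + 1) / 2) ?_ ?_
    · simpa using h
    · intro e he
      rw [Finset.mem_coe, Finset.mem_filter] at he
      have := (hE e).mp he.1
      simp only [Finset.mem_coe, Finset.mem_Icc]
      omega
    · intro e he e' he' hee
      simp only [Finset.mem_coe, Finset.mem_filter] at he he'
      have h1 := (hE e).mp he.1
      have h2 := (hE e').mp he'.1
      have hv := he.2
      have hv' := he'.2
      simp only at hee hv hv'
      have : e.1 = e'.1 ∧ e.2 = e'.2 := by omega
      exact Prod.ext this.1 this.2
  refine ⟨E, ?_, ?_, hdeg_le, ?_, ?_, fun c _ => hcol_le c⟩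
  · intro e he
    have := (hE e).mp he
    simp only [Finset.mem_Icc]
    omega
  · intro e he
    have := (hE e).mp he
    omega
  · -- exact degrees
    intro v hv
    rcases Nat.eq_zero_or_pos s with hs0 | hs1
    · have := hdeg_le v
      omega
    simp only [Finset.mem_union, Finset.mem_Icc] at hv
    rcases hv with hv | hv
    · -- v in A side
      have hcard : (Finset.Icc 1 (2 * s)).card = 2 * s := by simp
      rw [← hcard]
      refine Finset.card_nbij' (fun e => e.1 + e.2 - n) (fun k => (v, n - v + k)) ?_ ?_ ?_ ?_
      · intro e he
        rw [Finset.mem_coe, Finset.mem_filter] at he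
        have := (hE e).mp he.1
        simp only [Finset.mem_coe, Finset.mem_Icc]
        omega
      · intro k hk
        simp only [Finset.mem_coe, Finset.mem_Icc] at hk
        rw [Finset.mem_coe, Finset.mem_filter, hE]
        refine ⟨?_, Or.inl rfl⟩
        simp only
        omega
      · intro e he
        rw [Finset.mem_coe, Finset.mem_filter] at he
        have h1 := (hE e).mp he.1
        have hv2 := he.2
        simp only at hv2 ⊢
        rw [Prod.ext_iff]
        dsimp only
        omega
      · intro k hk
        simp only [Finset.mem_coe, Finset.mem_Icc] at hk
        simp only
        omega
    · -- v in B side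
      have hcard : (Finset.Icc 1 (2 * s)).card = 2 * s := by simp
      rw [← hcard]
      refine Finset.card_nbij' (fun e => e.1 + e.2 - n) (fun k => (n + k - v, v)) ?_ ?_ ?_ ?_
      · intro e he
        rw [Finset.mem_coe, Finset.mem_filter] at he
        have := (hE e).mp he.1
        simp only [Finset.mem_coe, Finset.mem_Icc]
        omega
      · intro k hk
        simp only [Finset.mem_coe, Finset.mem_Icc] at hk
        rw [Finset.mem_coe, Finset.mem_filter, hE]
        refine ⟨?_, Or.inr rfl⟩
        simp only
        omega
      · intro e he
        rw [Finset.mem_coe, Finset.mem_filter] at he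
        have h1 := (hE e).mp he.1
        have hv2 := he.2
        simp only at hv2 ⊢
        rw [Prod.ext_iff]
        dsimp only
        omega
      · intro k hk
        simp only [Finset.mem_coe, Finset.mem_Icc] at hk
        simp only
        omega
  · -- exact colour counts
    intro c hc
    simp only [Finset.mem_Icc] at hc
    rcases Nat.eq_zero_or_pos s with hs0 | hs1
    · have := hcol_le c
      omega
    have hcard : (Finset.Icc 1 s).card = s := by simp
    rw [← hcard]
    refine Finset.card_nbij' (fun e => (e.1 + e.2 - n + 1) / 2)
      (fun k => ((n + (2 * k - c % 2) - c) / 2, (n + (2 * k - c % 2) + c) / 2)) ?_ ?_ ?_ ?_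
    · intro e he
      rw [Finset.mem_coe, Finset.mem_filter] at he
      have := (hE e).mp he.1
      simp only [Finset.mem_coe, Finset.mem_Icc]
      omega
    · intro k hk
      simp only [Finset.mem_coe, Finset.mem_Icc] at hk
      rw [Finset.mem_coe, Finset.mem_filter, hE]
      simp only
      omega
    · intro e he
      rw [Finset.mem_coe, Finset.mem_filter] at he
      have h1 := (hE e).mp he.1
      have hv2 := he.2
      simp only at hv2 ⊢
      rw [Prod.ext_iff]
      dsimp only
      omega
    · intro k hk
      simp only [Finset.mem_coe, Finset.mem_Icc] at hk
      simp only
      omega
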